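/- Let K be a field containing F_q, let L be a separable closure of K, and let c_1, …, c_r ∈ K^×. For c ∈ K let g_c : L → L be the F_q-linear map g_c(x) = x^q + c·x, and for 0 ≤ s ≤ r let W_s := ker(g_{c_s} ∘ ⋯ ∘ g_{c_1}) (with W_0 = 0). Then: (a) each W_s is an F_q-subspace of L of dimension s, stable under every field automorphism of L fixing K pointwise; (b) for every 1 ≤ s ≤ r, every field automorphism σ of L fixing K pointwise, every λ ∈ W_s, and every α ∈ L^× with α^{q−1} = −c_s, the scalar σ(α)/α lies in F_q^× and σ(λ) − (σ(α)/α)·λ ∈ W_{s−1}. (That is, the Galois representation on W_r is upper triangular with diagonal given by the Kummer characters of −c_1, …, −c_r.) -/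

import Mathlib

/-- The composite `g_{c_s} ∘ ⋯ ∘ g_{c_1} : L → L`, where `g_c(x) = x^q + c·x`. -/
def gIter {K L : Type} [Field K] [Field L] [Algebra K L] (q : ℕ) (c : ℕ → K) :
    ℕ → L → L
  | 0 => id
  | s + 1 => (fun x : L => x ^ q + algebraMap K L (c (s + 1)) * x) ∘ gIter q c s

/-- Polynomial version of `gIter`. -/
noncomputable def Pgi (q : ℕ) {K : Type} [Field K] (c : ℕ → K) : ℕ → Polynomial K
  | 0 => Polynomial.X
  | s + 1 => Pgi q c s ^ q + Polynomial.C (c (s + 1)) * Pgi q c s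

section aux

variable {K L : Type} [Field K] [Field L] [Algebra K L] (q : ℕ) (c : ℕ → K)

lemma aeval_Pgi (x : L) : ∀ s, Polynomial.aeval x (Pgi q c s) = gIter q c s x
  | 0 => by simp [Pgi, gIter]
  | s + 1 => by
      simp [Pgi, gIter, map_add, map_pow, map_mul, Polynomial.aeval_C,
        aeval_Pgi x s]

lemma Pgi_monic (hq : 2 ≤ q) : ∀ s, (Pgi q c s).Monic ∧ (Pgi q c s).natDegree = q ^ s
  | 0 => by simp [Pgi, Polynomial.monic_X]
  | s + 1 => by
      obtain ⟨hm, hd⟩ := Pgi_monic hq s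
      have hmp : ((Pgi q c s) ^ q).Monic := hm.pow q
      have hdp : ((Pgi q c s) ^ q).natDegree = q ^ (s + 1) := by
        rw [Polynomial.natDegree_pow, hd]; ring
      have hlt : (Polynomial.C (c (s+1)) * Pgi q c s).natDegree < ((Pgi q c s) ^ q).natDegree := by
        rw [hdp]
        calc (Polynomial.C (c (s+1)) * Pgi q c s).natDegree ≤ (Pgi q c s).natDegree := by
              by_cases h : c (s+1) = 0
              · simp [h]
              · rw [Polynomial.natDegree_C_mul h]
          _ = q ^ s := hd
          _ < q ^ (s + 1) := by
              have h1 : 1 ≤ q ^ s := Nat.one_le_pow _ _ (by omega)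
              calc q ^ s = 1 * q ^ s := (one_mul _).symm
                _ < q * q ^ s := by
                    have := Nat.mul_lt_mul_of_lt_of_le (show 1 < q by omega) (le_refl (q ^ s)) (by omega)
                    simpa using this
                _ = q ^ (s + 1) := by ring
      refine ⟨hmp.add_of_left (Polynomial.degree_lt_degree hlt), ?_⟩
      show ((Pgi q c s) ^ q + Polynomial.C (c (s+1)) * Pgi q c s).natDegree = q ^ (s+1)
      rw [Polynomial.natDegree_add_eq_left_of_natDegree_lt hlt, hdp]

end aux

section aux2

variable {K : Type} [Field K] (q : ℕ) (c : ℕ → K)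

lemma Pgi_derivative (p : ℕ) [CharP K p] (hpq : (q : K) = 0) :
    ∀ s, Polynomial.derivative (Pgi q c s)
      = Polynomial.C (∏ i ∈ Finset.range s, c (i + 1))
  | 0 => by simp [Pgi]
  | s + 1 => by
      show Polynomial.derivative ((Pgi q c s) ^ q + Polynomial.C (c (s+1)) * Pgi q c s) = _
      rw [map_add, Polynomial.derivative_pow, Polynomial.derivative_C_mul,
        Pgi_derivative p hpq s, hpq, Finset.prod_range_succ]
      simp [mul_comm]

lemma Pgi_separable (p : ℕ) [CharP K p] (hpq : (q : K) = 0) (s : ℕ)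
    (hc : ∀ i, 1 ≤ i → i ≤ s → c i ≠ 0) : (Pgi q c s).Separable := by
  have hd := Pgi_derivative q c p hpq s
  have hne : (∏ i ∈ Finset.range s, c (i + 1)) ≠ 0 := by
    apply Finset.prod_ne_zero_iff.mpr
    intro i hi
    exact hc (i + 1) (by omega) (by simpa using Finset.mem_range.mp hi)
  exact ⟨0, Polynomial.C (∏ i ∈ Finset.range s, c (i + 1))⁻¹, by
    rw [hd, zero_mul, zero_add, ← Polynomial.C_mul, inv_mul_cancel₀ hne, Polynomial.C_1]⟩

end aux2

section aux3

variable {K L : Type} [Field K] [Field L] [Algebra K L] (q : ℕ) (c : ℕ → K)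

lemma gIter_zero (hq0 : q ≠ 0) : ∀ s, gIter q c s (0 : L) = 0
  | 0 => rfl
  | s + 1 => by
      show (gIter q c s (0:L)) ^ q + algebraMap K L (c (s+1)) * gIter q c s (0:L) = 0
      rw [gIter_zero hq0 s, zero_pow hq0, mul_zero, add_zero]

lemma gIter_add (p n : ℕ) [Fact p.Prime] [CharP L p] (hq : q = p ^ n) (x y : L) :
    ∀ s, gIter q c s (x + y) = gIter q c s x + gIter q c s y := by
  subst hq
  intro s
  induction s with
  | zero => rfl
  | succ s ih =>
      show (gIter (p^n) c s (x+y)) ^ (p^n) + algebraMap K L (c (s+1)) * gIter (p^n) c s (x+y) = _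
      rw [ih, add_pow_char_pow]
      show _ = (gIter (p^n) c s x) ^ (p ^ n) + algebraMap K L (c (s+1)) * gIter (p^n) c s x
        + ((gIter (p^n) c s y) ^ (p ^ n) + algebraMap K L (c (s+1)) * gIter (p^n) c s y)
      ring

lemma gIter_mul_const (a : L) (ha : a ^ q = a) (x : L) :
    ∀ s, gIter q c s (a * x) = a * gIter q c s x
  | 0 => rfl
  | s + 1 => by
      show (gIter q c s (a*x)) ^ q + algebraMap K L (c (s+1)) * gIter q c s (a*x) = _
      rw [gIter_mul_const a ha x s, mul_pow, ha]
      show _ = a * ((gIter q c s x) ^ q + algebraMap K L (c (s+1)) * gIter q c s x)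
      ring

lemma gIter_galois (σ : L ≃ₐ[K] L) (x : L) :
    ∀ s, σ (gIter q c s x) = gIter q c s (σ x)
  | 0 => rfl
  | s + 1 => by
      show σ ((gIter q c s x) ^ q + algebraMap K L (c (s+1)) * gIter q c s x) = _
      rw [map_add, map_mul, map_pow, AlgEquiv.commutes, gIter_galois σ x s]
      rfl

end aux3

/-- Let `K ⊇ F_q`, `L` a separable closure of `K`, and
`c_1, …, c_r ∈ K^×`. With `W_s := ker(g_{c_s} ∘ ⋯ ∘ g_{c_1})`:
(a) each `W_s` is an `F_q`-subspace of `L` of dimension `s`, stable under `Gal(L/K)`;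
(b) for `1 ≤ s ≤ r`, `σ ∈ Gal(L/K)`, `λ ∈ W_s` and `α ∈ L^×` with `α^{q−1} = −c_s`, the
scalar `σ(α)/α` lies in `F_q^×` and `σ(λ) − (σ(α)/α)·λ ∈ W_{s−1}`. -/
theorem kummer_filtration_upper_triangular
    (p m : ℕ) (hp : p.Prime) (hm : 0 < m)
    (Fq : Type) [Field Fq] [Fintype Fq] (hq : Fintype.card Fq = p ^ m)
    (K : Type) [Field K] [Algebra Fq K]
    (L : Type) [Field L] [Algebra Fq L] [Algebra K L] [IsScalarTower Fq K L]
    [IsSepClosure K L]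
    (r : ℕ) (c : ℕ → K) (hc : ∀ s : ℕ, 1 ≤ s → s ≤ r → c s ≠ 0) :
    (∀ s : ℕ, s ≤ r →
      (∃ W : Submodule Fq L,
        (W : Set L) = {x : L | gIter (Fintype.card Fq) c s x = 0} ∧
        Module.finrank Fq W = s) ∧
      (∀ σ : L ≃ₐ[K] L, ∀ x : L,
        gIter (Fintype.card Fq) c s x = 0 → gIter (Fintype.card Fq) c s (σ x) = 0)) ∧
    (∀ s : ℕ, 1 ≤ s → s ≤ r → ∀ σ : L ≃ₐ[K] L, ∀ lam : L,
      gIter (Fintype.card Fq) c s lam = 0 →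
      ∀ α : L, α ≠ 0 → α ^ (Fintype.card Fq - 1) = -(algebraMap K L (c s)) →
        (∃ u : Fqˣ, algebraMap Fq L (u : Fq) = σ α / α) ∧
        gIter (Fintype.card Fq) c (s - 1) (σ lam - (σ α / α) * lam) = 0) := by
  classical
  haveI factp : Fact p.Prime := ⟨hp⟩
  have hcharFq : CharP Fq p := by
    obtain ⟨p', hc'⟩ := CharP.exists Fq
    haveI := hc'
    obtain ⟨n, hp', hcard⟩ := FiniteField.card Fq p'
    have hpp' : p = p' := by
      have h1 : p ∣ p' ^ (n : ℕ) := by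
        rw [← hcard, hq]; exact dvd_pow_self p hm.ne'
      exact (Nat.prime_dvd_prime_iff_eq hp hp').mp (hp.dvd_of_dvd_pow h1)
    subst hpp'; exact hc'
  haveI := hcharFq
  haveI : CharP L p := charP_of_injective_algebraMap (algebraMap Fq L).injective p
  haveI : CharP K p := charP_of_injective_algebraMap (algebraMap Fq K).injective p
  haveI : IsSepClosed L := IsSepClosure.sep_closed K
  have hq2 : 2 ≤ Fintype.card Fq := Fintype.one_lt_card
  have hqK : ((Fintype.card Fq : ℕ) : K) = 0 := by
    rw [hq, Nat.cast_pow, CharP.cast_eq_zero, zero_pow hm.ne']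
  -- every element of L fixed by the q-power map comes from Fq
  have key : ∀ z : L, z ^ Fintype.card Fq = z → ∃ a : Fq, algebraMap Fq L a = z := by
    intro z hz
    by_contra hcon
    push_neg at hcon
    set f : Polynomial L := Polynomial.X ^ Fintype.card Fq - Polynomial.X with hf
    have hcoeff : f.coeff (Fintype.card Fq) = 1 := by
      rw [hf, Polynomial.coeff_sub, Polynomial.coeff_X_pow, if_pos rfl,
        Polynomial.coeff_X, if_neg (by omega), sub_zero]
    have hf0 : f ≠ 0 := fun h => by simp [h] at hcoeff
    have hdeg : f.natDegree ≤ Fintype.card Fq := by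
      refine le_trans (Polynomial.natDegree_sub_le _ _) ?_
      simp only [Polynomial.natDegree_X_pow, Polynomial.natDegree_X]
      omega
    set T : Finset L :=
      insert z (Finset.univ.image (fun a : Fq => algebraMap Fq L a)) with hT
    have hsub : T ⊆ f.roots.toFinset := by
      intro t ht
      rw [Multiset.mem_toFinset, Polynomial.mem_roots hf0]
      rw [hT, Finset.mem_insert] at ht
      rcases ht with rfl | ht
      · show f.eval t = 0
        rw [hf]; simp [hz]
      · obtain ⟨a, _, rfl⟩ := Finset.mem_image.mp ht
        show f.eval _ = 0
        rw [hf]; simp [← map_pow, FiniteField.pow_card]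
    have hcardT : T.card = Fintype.card Fq + 1 := by
      rw [hT, Finset.card_insert_of_notMem (by
        intro hmem
        obtain ⟨a, _, ha⟩ := Finset.mem_image.mp hmem
        exact hcon a ha),
        Finset.card_image_of_injective _ (algebraMap Fq L).injective,
        Finset.card_univ]
    have : T.card ≤ Fintype.card Fq :=
      le_trans (Finset.card_le_card hsub)
        (le_trans (Multiset.toFinset_card_le _) (le_trans (Polynomial.card_roots' f) hdeg))
    omega
  constructor
  · -- part (a)
    intro s hs
    constructor
    · -- the submodule of dimension s
      have hsep : (Pgi (Fintype.card Fq) c s).Separable :=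
        Pgi_separable _ c p hqK s (fun i h1 h2 => hc i h1 (le_trans h2 hs))
      have hmon := Pgi_monic (Fintype.card Fq) c hq2 s
      have hPne : Pgi (Fintype.card Fq) c s ≠ 0 := hmon.1.ne_zero
      have hsplit : ((Pgi (Fintype.card Fq) c s).map (algebraMap K L)).Splits :=
        IsSepClosed.splits_codomain _ hsep
      have hcardroot : Fintype.card ((Pgi (Fintype.card Fq) c s).rootSet L)
          = Fintype.card Fq ^ s := by
        rw [Polynomial.card_rootSet_eq_natDegree hsep hsplit, hmon.2]
      have hsetroot : {x : L | gIter (Fintype.card Fq) c s x = 0}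
          = (Pgi (Fintype.card Fq) c s).rootSet L := by
        ext x
        simp [Polynomial.mem_rootSet, hPne, aeval_Pgi]
      let W : Submodule Fq L :=
        { carrier := {x : L | gIter (Fintype.card Fq) c s x = 0}
          add_mem' := by
            intro a b ha hb
            show gIter (Fintype.card Fq) c s (a + b) = 0
            rw [gIter_add _ c p m hq a b s]
            rw [Set.mem_setOf_eq] at ha hb
            rw [ha, hb, add_zero]
          zero_mem' := gIter_zero _ c (by omega) s
          smul_mem' := by
            intro a x hx
            show gIter (Fintype.card Fq) c s (a • x) = 0
            rw [Set.mem_setOf_eq] at hx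
            rw [Algebra.smul_def,
              gIter_mul_const _ c _ (by rw [← map_pow, FiniteField.pow_card]) x s, hx,
              mul_zero] }
      refine ⟨W, rfl, ?_⟩
      have hfin : ({x : L | gIter (Fintype.card Fq) c s x = 0}).Finite := by
        rw [hsetroot]; exact (Pgi (Fintype.card Fq) c s).rootSet_finite L
      haveI : Fintype W := hfin.fintype
      have hcardW : Fintype.card W = Fintype.card Fq ^ s := by
        rw [← hcardroot]
        exact Fintype.card_congr (Equiv.setCongr hsetroot)
      have hce := Module.card_eq_pow_finrank (K := Fq) (V := W)
      rw [hcardW] at hce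
      exact Nat.pow_right_injective hq2 hce.symm
    · intro σ x hx
      rw [← gIter_galois _ c σ x s, hx, map_zero]
  · -- part (b)
    intro s hs1 hsr σ lam hlam α hα hαq
    obtain ⟨s', rfl⟩ : ∃ s', s = s' + 1 := ⟨s - 1, (Nat.succ_pred_eq_of_pos hs1).symm⟩
    have hσα : σ α ≠ 0 := fun h => hα (by simpa using congrArg σ.symm h)
    have hμ0 : σ α / α ≠ 0 := div_ne_zero hσα hα
    have hpow : (σ α) ^ (Fintype.card Fq - 1) = α ^ (Fintype.card Fq - 1) := by
      rw [← map_pow, hαq, map_neg, AlgEquiv.commutes, ← hαq]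
    have hμ1 : (σ α / α) ^ (Fintype.card Fq - 1) = 1 := by
      rw [div_pow, hpow, div_self (pow_ne_zero _ hα)]
    have hμq : (σ α / α) ^ Fintype.card Fq = σ α / α := by
      have h1 : Fintype.card Fq = (Fintype.card Fq - 1) + 1 := by omega
      rw [h1, pow_succ, hμ1, one_mul]
    obtain ⟨a, ha⟩ := key _ hμq
    have ha0 : a ≠ 0 := fun h => hμ0 (by rw [← ha, h, map_zero])
    refine ⟨⟨Units.mk0 a ha0, ha⟩, ?_⟩
    -- second part
    have hs'eq : s' + 1 - 1 = s' := by omega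
    rw [hs'eq]
    set y : L := gIter (Fintype.card Fq) c s' lam with hy
    have hky : y ^ Fintype.card Fq + algebraMap K L (c (s' + 1)) * y = 0 := hlam
    have hyq : y ^ Fintype.card Fq = α ^ (Fintype.card Fq - 1) * y := by
      rw [hαq]; linear_combination hky
    have hσy : σ y = (σ α / α) * y := by
      by_cases hy0 : y = 0
      · rw [hy0, map_zero, mul_zero]
      · have hy1 : y ^ (Fintype.card Fq - 1) = α ^ (Fintype.card Fq - 1) := by
          have h1 : y ^ (Fintype.card Fq - 1) * y = α ^ (Fintype.card Fq - 1) * y := by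
            rw [← hyq, ← pow_succ]
            congr 1
            omega
          exact mul_right_cancel₀ hy0 h1
        have hyα : (y / α) ^ Fintype.card Fq = y / α := by
          have h2 : (y / α) ^ (Fintype.card Fq - 1) = 1 := by
            rw [div_pow, hy1, div_self (pow_ne_zero _ hα)]
          have h1 : Fintype.card Fq = (Fintype.card Fq - 1) + 1 := by omega
          rw [h1, pow_succ, h2, one_mul]
        obtain ⟨t, ht⟩ := key _ hyα
        have hyt : y = algebraMap Fq L t * α := by
          rw [ht, div_mul_cancel₀ _ hα]
        have hfix : σ (algebraMap Fq L t) = algebraMap Fq L t := by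
          rw [IsScalarTower.algebraMap_apply Fq K L, AlgEquiv.commutes]
        rw [hyt, map_mul, hfix]
        field_simp
    have hgal : gIter (Fintype.card Fq) c s' (σ lam) = σ y :=
      (gIter_galois _ c σ lam s').symm
    have hmc : gIter (Fintype.card Fq) c s' ((σ α / α) * lam) = (σ α / α) * y := by
      rw [← ha, gIter_mul_const _ c _ (by rw [← map_pow, FiniteField.pow_card]) lam s']
    have hsubeq : σ lam - (σ α / α) * lam = σ lam + (-(σ α / α)) * lam := by ring
    rw [hsubeq]
    have hneg : -(σ α / α) = algebraMap Fq L (-a) := by rw [map_neg, ha]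
    rw [hneg, gIter_add _ c p m hq _ _ s',
      gIter_mul_const _ c _ (by rw [← map_pow, FiniteField.pow_card]) lam s', hgal, ← hy,
      hσy, map_neg, ha]
    ring
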